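/- The function f(x) = (1/p)‖x‖_p^p = (1/p) Σ_{i=1}^d |x_i|^p on ℝ^d, for an integer p ≥ 2, is strongly smooth of order p with constants L_m = (p-1)(p-2)⋯(p-m+1): for each 2 ≤ m ≤ p-1 and every unit vector v ∈ ℝ^d (Euclidean norm), |∇^m f(x)(v,…,v)| ≤ (p-1)⋯(p-m+1) · ‖∇f(x)‖_2^{(p-m)/(p-1)}, where ‖∇f(x)‖_2 = ‖x‖_{2p-2}^{p-1}. -/

import Mathlib

open Real
set_option maxHeartbeats 1000000

noncomputable def lpPsi (p k : ℕ) (t : ℝ) : ℝ :=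
  if Even p then t ^ (p - k) else |t| * t ^ (p - k - 1)

lemma abs_lpPsi {p k : ℕ} (hk : k + 1 ≤ p) (t : ℝ) : |lpPsi p k t| = |t| ^ (p - k) := by
  unfold lpPsi
  split_ifs with h
  · rw [abs_pow]
  · rw [abs_mul, abs_abs, abs_pow, ← pow_succ']
    congr 1
    omega

lemma sign_mul_self_eq_abs {t : ℝ} (ht : t ≠ 0) : (SignType.sign t : ℝ) * t = |t| := by
  rcases ht.lt_or_gt with h | h
  · simp [sign_neg h, abs_of_neg h]
  · simp [sign_pos h, abs_of_pos h]

lemma hasDerivAt_abs_mul_pow {n : ℕ} (hn : 1 ≤ n) (t : ℝ) :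
    HasDerivAt (fun s : ℝ => |s| * s ^ n) (((n : ℝ) + 1) * (|t| * t ^ (n - 1))) t := by
  rcases eq_or_ne t 0 with rfl | ht
  · rw [hasDerivAt_iff_tendsto_slope]
    have h0 : ((n:ℝ)+1) * (|(0:ℝ)| * 0 ^ (n-1)) = 0 := by simp
    rw [h0]
    have hc : Filter.Tendsto (fun s : ℝ => |s| * s ^ (n - 1)) (nhdsWithin 0 {(0:ℝ)}ᶜ) (nhds 0) := by
      have hcont : Continuous fun s : ℝ => |s| * s ^ (n - 1) := by fun_prop
      have h := (hcont.tendsto 0).mono_left (nhdsWithin_le_nhds (s := {(0:ℝ)}ᶜ))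
      rcases Nat.eq_or_lt_of_le hn with h1 | h1
      · simpa [← h1] using h
      · have hne : (n:ℕ) - 1 ≠ 0 := by omega
        simpa [zero_pow hne] using h
    refine hc.congr' ?_
    filter_upwards [self_mem_nhdsWithin] with s hs
    have hs : s ≠ 0 := hs
    have hsplit : |s| * s ^ n = (|s| * s ^ (n-1)) * s := by
      rw [mul_assoc, ← pow_succ]
      congr 2
      omega
    have hf0 : |(0:ℝ)| * (0:ℝ) ^ n = 0 := by
      rw [abs_zero, zero_mul]
    rw [slope_def_field, hf0, sub_zero, sub_zero, hsplit, mul_div_cancel_right₀ _ hs]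
  · have h1 : HasDerivAt (fun s : ℝ => |s|) (SignType.sign t : ℝ) t := hasDerivAt_abs ht
    have h2 : HasDerivAt (fun s : ℝ => s ^ n) ((n:ℝ) * t ^ (n-1)) t := by
      simpa using hasDerivAt_pow n t
    refine (h1.mul h2).congr_deriv ?_
    have htp : t ^ n = t * t ^ (n-1) := by
      calc t ^ n = t ^ (1 + (n-1)) := by congr 1; omega
        _ = t * t ^ (n-1) := by rw [pow_add, pow_one]
    rw [htp]
    have hs2 : (SignType.sign t : ℝ) * (t * t^(n-1)) = |t| * t^(n-1) := by
      rw [← mul_assoc, sign_mul_self_eq_abs ht]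
    rw [hs2]
    ring

lemma hasDerivAt_lpPsi {p k : ℕ} (hk : k + 2 ≤ p) (t : ℝ) :
    HasDerivAt (lpPsi p k) (((p : ℝ) - k) * lpPsi p (k+1) t) t := by
  unfold lpPsi
  split_ifs with h
  · have h1 := hasDerivAt_pow (p - k) t
    have e1 : ((p:ℝ) - k) = ((p - k : ℕ) : ℝ) := by
      push_cast [Nat.cast_sub (show k ≤ p by omega)]; ring
    have e2 : p - (k+1) = p - k - 1 := by omega
    rw [e1, e2]
    exact h1
  · have h1 := hasDerivAt_abs_mul_pow (n := p - k - 1) (by omega) t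
    have e1 : ((p:ℝ) - k) = ((p - k - 1 : ℕ) : ℝ) + 1 := by
      have : p - k - 1 = p - (k+1) := by omega
      rw [this]
      push_cast [Nat.cast_sub (show k + 1 ≤ p by omega)]; ring
    have e2 : p - (k+1) - 1 = p - k - 1 - 1 := by omega
    rw [e1, e2]
    exact h1

lemma continuous_lpPsi {p k : ℕ} : Continuous (lpPsi p k) := by
  unfold lpPsi
  split_ifs with h
  · fun_prop
  · fun_prop

lemma contDiff_lpPsi {p : ℕ} : ∀ (j k : ℕ), k + j + 1 ≤ p → ContDiff ℝ (j : ℕ) (lpPsi p k) := by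
  intro j
  induction j with
  | zero => intro k hk; exact contDiff_zero.2 continuous_lpPsi
  | succ j ih =>
    intro k hk
    have hcast : ((j + 1 : ℕ) : WithTop ℕ∞) = (j : ℕ) + 1 := by norm_cast
    rw [hcast, contDiff_succ_iff_deriv]
    have hd : deriv (lpPsi p k) = fun t => ((p:ℝ) - k) * lpPsi p (k+1) t :=
      funext fun t => (hasDerivAt_lpPsi (by omega) t).deriv
    refine ⟨fun t => (hasDerivAt_lpPsi (by omega) t).differentiableAt, by simp, ?_⟩
    rw [hd]
    exact contDiff_const.mul (ih (k+1) (by omega))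

lemma lpPsi_zero {p : ℕ} (hp : 1 ≤ p) (t : ℝ) : lpPsi p 0 t = |t| ^ p := by
  unfold lpPsi
  split_ifs with h
  · rw [h.pow_abs, Nat.sub_zero]
  · have he : Even (p - 0 - 1) := by
      rcases Nat.even_or_odd p with h2 | h2
      · exact absurd h2 h
      · simp only [Nat.sub_zero]
        rw [Nat.even_sub hp, Nat.even_iff, Nat.even_iff] at *
        omega
    rw [← he.pow_abs, ← pow_succ']
    congr 1
    omega

lemma iteratedDeriv_lpPsi {p : ℕ} : ∀ m, m + 1 ≤ p →
    iteratedDeriv m (lpPsi p 0) = fun t => (∏ j ∈ Finset.range m, ((p:ℝ) - j)) * lpPsi p m t := by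
  intro m
  induction m with
  | zero => intro _; simp [iteratedDeriv_zero]
  | succ m ih =>
    intro hm
    rw [iteratedDeriv_succ, ih (by omega)]
    funext t
    have : HasDerivAt (fun t => (∏ j ∈ Finset.range m, ((p:ℝ) - j)) * lpPsi p m t)
        ((∏ j ∈ Finset.range m, ((p:ℝ) - j)) * (((p:ℝ) - m) * lpPsi p (m+1) t)) t :=
      (hasDerivAt_lpPsi (by omega) t).const_mul _
    rw [this.deriv, Finset.prod_range_succ]
    ring

variable {d : ℕ}

lemma lp_iteratedFDeriv_apply {p : ℕ} {f : EuclideanSpace ℝ (Fin d) → ℝ}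
    (hf' : f = fun x : EuclideanSpace ℝ (Fin d) => ∑ i, (1/(p:ℝ)) * lpPsi p 0 (x i))
    (m : ℕ) (hm : m + 1 ≤ p) (x v : EuclideanSpace ℝ (Fin d)) :
    iteratedFDeriv ℝ m f x (fun _ => v) =
      ∑ i, (1/(p:ℝ)) * ((v i)^m * ((∏ j ∈ Finset.range m, ((p:ℝ)-j)) * lpPsi p m (x i))) := by
  have hpsi : ContDiff ℝ (m : ℕ) (lpPsi p 0) := contDiff_lpPsi m 0 (by omega)
  have hcomp : ∀ i : Fin d, ContDiff ℝ (m : ℕ)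
      (lpPsi p 0 ∘ (EuclideanSpace.proj (𝕜 := ℝ) i)) :=
    fun i => hpsi.comp (EuclideanSpace.proj (𝕜 := ℝ) i).contDiff
  have hg : ∀ i : Fin d, ContDiff ℝ (m : ℕ)
      (fun x : EuclideanSpace ℝ (Fin d) => (1/(p:ℝ)) * lpPsi p 0 (x i)) :=
    fun i => contDiff_const.mul (hcomp i)
  rw [hf']
  have hsum := iteratedFDeriv_sum (𝕜 := ℝ)
    (f := fun (i : Fin d) (x : EuclideanSpace ℝ (Fin d)) => (1/(p:ℝ)) * lpPsi p 0 (x i))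
    (u := Finset.univ) (i := m) (fun j _ => hg j)
  beta_reduce at hsum
  rw [hsum]
  rw [Finset.sum_apply, ContinuousMultilinearMap.sum_apply]
  refine Finset.sum_congr rfl fun i _ => ?_
  have h1 : iteratedFDeriv ℝ m
      (fun x : EuclideanSpace ℝ (Fin d) => (1/(p:ℝ)) * lpPsi p 0 (x i)) x (fun _ => v)
      = (1/(p:ℝ)) • iteratedFDeriv ℝ m
        (lpPsi p 0 ∘ (EuclideanSpace.proj (𝕜 := ℝ) i)) x (fun _ => v) := by
    rw [show (fun x : EuclideanSpace ℝ (Fin d) => (1/(p:ℝ)) * lpPsi p 0 (x i)) =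
        fun x => (1/(p:ℝ)) • (lpPsi p 0 ∘ (EuclideanSpace.proj (𝕜 := ℝ) i)) x from rfl,
      iteratedFDeriv_const_smul_apply' (hcomp i).contDiffAt]
    rfl
  rw [h1, (EuclideanSpace.proj (𝕜 := ℝ) i).iteratedFDeriv_comp_right hpsi x le_rfl,
    ContinuousMultilinearMap.compContinuousLinearMap_apply]
  have h2 : (fun _ : Fin m => EuclideanSpace.proj (𝕜 := ℝ) i v) = fun _ : Fin m => v i := rfl
  rw [h2, iteratedFDeriv_apply_eq_iteratedDeriv_mul_prod, iteratedDeriv_lpPsi m hm]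
  simp [smul_eq_mul]

lemma lp_gradient {p : ℕ} (hp : 2 ≤ p) {f : EuclideanSpace ℝ (Fin d) → ℝ}
    (hf' : f = fun x : EuclideanSpace ℝ (Fin d) => ∑ i, (1/(p:ℝ)) * lpPsi p 0 (x i))
    (x : EuclideanSpace ℝ (Fin d)) :
    gradient f x = WithLp.toLp 2 (fun i => lpPsi p 1 (x i)) := by
  have hp0 : (p : ℝ) ≠ 0 := by positivity
  set g : EuclideanSpace ℝ (Fin d) := WithLp.toLp 2 (fun i => lpPsi p 1 (x i)) with hg
  have key : ∀ i : Fin d, HasFDerivAt (fun x : EuclideanSpace ℝ (Fin d) => (1/(p:ℝ)) * lpPsi p 0 (x i))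
      ((1/(p:ℝ)) • ((((p:ℝ) - (0:ℕ)) * lpPsi p 1 (x i)) • (EuclideanSpace.proj (𝕜 := ℝ) i))) x := by
    intro i
    have hd := hasDerivAt_lpPsi (p := p) (k := 0) (by omega) (x i)
    have hcomp := hd.comp_hasFDerivAt x (EuclideanSpace.proj (𝕜 := ℝ) i).hasFDerivAt
    exact hcomp.const_mul (1/(p:ℝ))
  have hsum := HasFDerivAt.fun_sum (u := Finset.univ) (fun i _ => key i)
  have hDer : HasFDerivAt f (InnerProductSpace.toDual ℝ (EuclideanSpace ℝ (Fin d)) g) x := by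
    rw [hf']
    refine hsum.congr_fderiv ?_
    ext w
    simp only [InnerProductSpace.toDual_apply_apply, PiLp.toLp_apply, PiLp.inner_apply, RCLike.inner_apply,
      ContinuousLinearMap.sum_apply, ContinuousLinearMap.smul_apply, smul_eq_mul,
      starRingEnd_apply, star_trivial, hg, PiLp.proj_apply]
    refine Finset.sum_congr rfl fun i _ => ?_
    push_cast
    field_simp
    ring
  have : HasGradientAt f g x := hasGradientAt_iff_hasFDerivAt.2 hDer
  exact this.gradient

theorem lp_power_loss_strongly_smooth
    (d p : ℕ) (hp : 2 ≤ p)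
    (f : EuclideanSpace ℝ (Fin d) → ℝ)
    (hfdef : ∀ x : EuclideanSpace ℝ (Fin d), f x = (1 / (p : ℝ)) * ∑ i, |x i| ^ (p : ℝ)) :
    ∀ x : EuclideanSpace ℝ (Fin d),
      ‖gradient f x‖ =
        (∑ i, |x i| ^ (2 * (p : ℝ) - 2)) ^ (((p : ℝ) - 1) / (2 * (p : ℝ) - 2)) ∧
      ∀ m : ℕ, 2 ≤ m → m ≤ p - 1 → ∀ v : EuclideanSpace ℝ (Fin d), ‖v‖ = 1 →
        |iteratedFDeriv ℝ m f x (fun _ => v)| ≤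
          (∏ j ∈ Finset.Icc 1 (m - 1), ((p : ℝ) - j)) *
            ‖gradient f x‖ ^ (((p : ℝ) - (m : ℝ)) / ((p : ℝ) - 1)) := by
  intro x
  have hp0 : (p : ℝ) ≠ 0 := by positivity
  have hp1 : (1:ℝ) < (p:ℝ) := by exact_mod_cast hp
  have hp1' : (p:ℝ) - 1 ≠ 0 := by linarith
  have h2p2 : (0:ℝ) < 2*(p:ℝ) - 2 := by linarith
  have hf' : f = fun x : EuclideanSpace ℝ (Fin d) => ∑ i, (1/(p:ℝ)) * lpPsi p 0 (x i) := by
    funext y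
    rw [hfdef y, Finset.mul_sum]
    refine Finset.sum_congr rfl fun i _ => ?_
    rw [lpPsi_zero (by omega), ← Real.rpow_natCast]
  set S : ℝ := ∑ i, |x i| ^ (2 * (p : ℝ) - 2) with hS
  have hS0 : 0 ≤ S := Finset.sum_nonneg fun i _ => Real.rpow_nonneg (abs_nonneg _) _
  have hgrad : gradient f x = WithLp.toLp 2 (fun i => lpPsi p 1 (x i)) :=
    lp_gradient hp hf' x
  have hnorm : ‖gradient f x‖ = S ^ ((1:ℝ)/2) := by
    rw [hgrad, EuclideanSpace.norm_eq, ← Real.sqrt_eq_rpow]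
    congr 1
    refine Finset.sum_congr rfl fun i _ => ?_
    rw [PiLp.toLp_apply, Real.norm_eq_abs, abs_lpPsi (by omega), ← pow_mul, ← Real.rpow_natCast]
    congr 1
    push_cast [Nat.cast_sub (show 1 ≤ p by omega)]
    ring
  have hexp : ((p:ℝ) - 1) / (2*(p:ℝ) - 2) = 1/2 := by
    rw [show 2*(p:ℝ) - 2 = ((p:ℝ) - 1) * 2 by ring, div_mul_eq_div_div, div_self hp1']
  refine ⟨by rw [hnorm, hexp], ?_⟩
  intro m hm2 hmp v hv
  have hp3 : 3 ≤ p := by omega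
  have hmp' : m + 1 ≤ p := by omega
  have hmR : ((p:ℝ) - m) = ((p - m : ℕ) : ℝ) := by
    rw [Nat.cast_sub (by omega : m ≤ p)]
  have hpm : (0:ℝ) < (p:ℝ) - m := by
    rw [hmR]; exact_mod_cast Nat.sub_pos_of_lt (by omega)
  have hm2R : (2:ℝ) ≤ (m:ℝ) := by exact_mod_cast hm2
  have hp3R : (3:ℝ) ≤ (p:ℝ) := by exact_mod_cast hp3
  have hpm2 : (0:ℝ) < (p:ℝ) + m - 2 := by linarith
  set L : ℝ := ∏ j ∈ Finset.Icc 1 (m - 1), ((p : ℝ) - j) with hLdef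
  have hL0 : 0 ≤ L := Finset.prod_nonneg fun j hj => by
    simp only [Finset.mem_Icc] at hj
    have hjp : j + 1 ≤ p := by omega
    have : (j:ℝ) + 1 ≤ (p:ℝ) := by exact_mod_cast hjp
    linarith
  have hprod : (∏ j ∈ Finset.range m, ((p:ℝ) - j)) = p * L := by
    have h01 : (∏ j ∈ Finset.Ico (0:ℕ) 1, ((p:ℝ) - (j:ℕ))) = p := by simp
    have h1m : (∏ j ∈ Finset.Ico (1:ℕ) m, ((p:ℝ) - (j:ℕ))) = L := by
      rw [hLdef]
      conv_lhs => rw [show m = (m-1)+1 by omega, Finset.Ico_add_one_right_eq_Icc]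
    rw [Finset.range_eq_Ico,
      ← Finset.prod_Ico_consecutive _ (Nat.zero_le 1) (show 1 ≤ m by omega), h01, h1m]
  rw [lp_iteratedFDeriv_apply hf' m hmp' x v]
  have habs : ∀ i, |(1/(p:ℝ)) * ((v i)^m * ((∏ j ∈ Finset.range m, ((p:ℝ)-j)) * lpPsi p m (x i)))|
      = L * (|x i| ^ (p - m) * |v i| ^ m) := by
    intro i
    rw [hprod, abs_mul, abs_mul, abs_mul, abs_pow, abs_lpPsi hmp',
      abs_of_nonneg (le_of_lt (by positivity : (0:ℝ) < 1/(p:ℝ))),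
      abs_of_nonneg (mul_nonneg (by positivity) hL0)]
    field_simp
  have h1 : |∑ i, (1/(p:ℝ)) * ((v i)^m * ((∏ j ∈ Finset.range m, ((p:ℝ)-j)) * lpPsi p m (x i)))|
      ≤ L * ∑ i, |x i| ^ (p - m) * |v i| ^ m := by
    refine (Finset.abs_sum_le_sum_abs _ _).trans ?_
    rw [Finset.mul_sum]
    exact le_of_eq (Finset.sum_congr rfl fun i _ => habs i)
  set r : ℝ := (2*(p:ℝ)-2)/((p:ℝ)-m) with hrdef
  set q : ℝ := (2*(p:ℝ)-2)/((p:ℝ)+m-2) with hqdef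
  have hpq : Real.HolderConjugate r q := by
    rw [Real.holderConjugate_iff]
    constructor
    · rw [hrdef, lt_div_iff₀ hpm]; linarith
    · rw [hrdef, hqdef, inv_div, inv_div]
      field_simp
      ring
  have holder := Real.inner_le_Lp_mul_Lq_of_nonneg (s := Finset.univ) hpq
    (f := fun i : Fin d => |x i| ^ (p - m)) (g := fun i : Fin d => |v i| ^ m)
    (fun i _ => pow_nonneg (abs_nonneg _) _) (fun i _ => pow_nonneg (abs_nonneg _) _)
  have hXr : (∑ i, ((|x i| : ℝ) ^ (p - m)) ^ r) = S := by
    refine Finset.sum_congr rfl fun i _ => ?_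
    rw [← Real.rpow_natCast |x i| (p - m), ← Real.rpow_mul (abs_nonneg _)]
    congr 1
    rw [← hmR, hrdef]
    field_simp
  have h1r : 1/r = ((p:ℝ)-m)/(2*(p:ℝ)-2) := by rw [hrdef, one_div, inv_div]
  have hv2 : ∑ i, (v i)^2 = 1 := by
    have h := hv
    rw [EuclideanSpace.norm_eq, Real.sqrt_eq_one] at h
    simpa [Real.norm_eq_abs, sq_abs] using h
  have hvi : ∀ i, |v i| ≤ 1 := by
    intro i
    have h := Finset.single_le_sum (f := fun i => (v i)^2) (fun i _ => sq_nonneg _)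
      (Finset.mem_univ i)
    rw [hv2] at h
    have h' : (v i)^2 ≤ 1 := h
    nlinarith [sq_abs (v i), abs_nonneg (v i)]
  have hq2 : (2:ℝ) ≤ (m:ℝ) * q := by
    rw [hqdef, ← mul_div_assoc, le_div_iff₀ hpm2]
    nlinarith
  have hqpos : 0 < q := div_pos h2p2 hpm2
  have hmqpos : (0:ℝ) < (m:ℝ) * q := mul_pos (by linarith) hqpos
  have hBq : (∑ i, ((|v i| : ℝ) ^ m) ^ q) ≤ 1 := by
    rw [← hv2]
    refine Finset.sum_le_sum fun i _ => ?_
    rw [← Real.rpow_natCast |v i| m, ← Real.rpow_mul (abs_nonneg _)]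
    rcases eq_or_ne (v i) 0 with h | h
    · rw [h]
      rw [abs_zero, Real.zero_rpow (ne_of_gt hmqpos)]
      positivity
    · calc |v i| ^ ((m:ℝ)*q) ≤ |v i| ^ (2:ℝ) :=
            Real.rpow_le_rpow_of_exponent_ge (abs_pos.2 h) (hvi i) hq2
        _ = (v i)^2 := by rw [Real.rpow_two, sq_abs]
  have hq0 : 0 ≤ 1/q := by positivity
  have h2 : (∑ i, |x i| ^ (p - m) * |v i| ^ m) ≤ S ^ (((p:ℝ)-m)/(2*(p:ℝ)-2)) := by
    refine holder.trans ?_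
    rw [hXr, h1r]
    calc S ^ (((p:ℝ)-m)/(2*(p:ℝ)-2)) * (∑ i, ((|v i| : ℝ) ^ m) ^ q) ^ (1/q)
        ≤ S ^ (((p:ℝ)-m)/(2*(p:ℝ)-2)) * 1 := by
          refine mul_le_mul_of_nonneg_left ?_ (Real.rpow_nonneg hS0 _)
          exact Real.rpow_le_one (Finset.sum_nonneg fun i _ =>
            Real.rpow_nonneg (pow_nonneg (abs_nonneg _) _) _) hBq hq0
      _ = S ^ (((p:ℝ)-m)/(2*(p:ℝ)-2)) := mul_one _
  have hRHS : ‖gradient f x‖ ^ (((p : ℝ) - (m : ℝ)) / ((p : ℝ) - 1))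
      = S ^ (((p:ℝ)-m)/(2*(p:ℝ)-2)) := by
    rw [hnorm, ← Real.rpow_mul hS0]
    congr 1
    rw [div_mul_div_comm, one_mul, show (2:ℝ)*((p:ℝ)-1) = 2*(p:ℝ)-2 from by ring]
  rw [hRHS]
  calc |∑ i, (1/(p:ℝ)) * ((v i)^m * ((∏ j ∈ Finset.range m, ((p:ℝ)-j)) * lpPsi p m (x i)))|
      ≤ L * ∑ i, |x i| ^ (p - m) * |v i| ^ m := h1
    _ ≤ L * S ^ (((p:ℝ)-m)/(2*(p:ℝ)-2)) := mul_le_mul_of_nonneg_left h2 hL0
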